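/- Let p be a prime and let R be a finite p-group that is not cyclic, and suppose there exists a subgroup H of R such that every automorphism of R fixing H setwise is a power automorphism. Then the Baer norm N(R) is abelian. -/

import Mathlib

set_option linter.unusedSectionVars false
set_option linter.unnecessarySimpa false

namespace Stmt13

variable {R : Type*} [Group R] [Finite R]

/-- `g` normalizes every cyclic subgroup by conjugation into it. -/
def InN (g : R) : Prop := ∀ x : R, g * x * g⁻¹ ∈ Subgroup.zpowers x

lemma conj_pow (g x : R) (n : ℕ) : g * x ^ n * g⁻¹ = (g * x * g⁻¹) ^ n := by
  induction n with
  | zero => simp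
  | succ n ih => rw [pow_succ, pow_succ, ← ih]; group

lemma conj_zpow (g x : R) (n : ℤ) : g * x ^ n * g⁻¹ = (g * x * g⁻¹) ^ n := by
  cases n with
  | ofNat n => simpa using conj_pow g x n
  | negSucc n =>
    simp only [zpow_negSucc]
    rw [← conj_pow]
    group

/-- extract a natural exponent from zpowers membership (finite group). -/
lemma mem_zpowers_nat {x w : R} (h : w ∈ Subgroup.zpowers x) : ∃ n : ℕ, x ^ n = w := by
  obtain ⟨k, hk⟩ := Subgroup.mem_zpowers_iff.mp h
  have hpos : 0 < (orderOf x : ℤ) := by exact_mod_cast orderOf_pos x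
  have h0 : 0 ≤ k % (orderOf x : ℤ) := Int.emod_nonneg k (by omega)
  refine ⟨(k % (orderOf x : ℤ)).toNat, ?_⟩
  have : x ^ (((k % (orderOf x : ℤ)).toNat : ℤ)) = x ^ k := by
    rw [Int.toNat_of_nonneg h0, zpow_mod_orderOf]
  rw [← zpow_natCast, this, hk]

lemma InN.conj_mem {g : R} (hg : InN g) (x : R) : g * x * g⁻¹ ∈ Subgroup.zpowers x := hg x

lemma InN.mul {g k : R} (hg : InN g) (hk : InN k) : InN (g * k) := by
  intro x
  obtain ⟨n, hn⟩ := mem_zpowers_nat (hk x)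
  have : (g * k) * x * (g * k)⁻¹ = g * (k * x * k⁻¹) * g⁻¹ := by group
  rw [this, ← hn, conj_pow]
  exact Subgroup.pow_mem _ (hg x) n

/-- If `x = y ^ t` and the orders agree, then `y ∈ zpowers x`. -/
lemma zpowers_of_pow_eq {x y : R} (t : ℕ) (h : y ^ t = x) (ho : orderOf x = orderOf y) :
    y ∈ Subgroup.zpowers x := by
  rcases eq_or_ne y 1 with rfl | hy1
  · have : x = 1 := by rw [← h, one_pow]
    rw [this]; exact Subgroup.one_mem _
  have hoy : 1 < orderOf y := by
    have := orderOf_pos y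
    rcases Nat.lt_or_ge (orderOf y) 2 with h2 | h2
    · have h1 : orderOf y = 1 := by omega
      exact absurd (orderOf_eq_one_iff.mp h1) hy1
    · omega
  have hy : orderOf (y ^ t) = orderOf y := by rw [h, ho]
  rw [orderOf_pow] at hy
  have hle : (orderOf y).gcd t ∣ orderOf y := Nat.gcd_dvd_left _ _
  have hg : (orderOf y).gcd t = 1 := by
    have h2 := Nat.div_mul_cancel hle
    rw [hy] at h2
    have := Nat.eq_mul_of_div_eq_right hle rfl
    nlinarith [Nat.le_of_dvd (orderOf_pos y) hle, orderOf_pos y]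
  have hco : Nat.Coprime t (orderOf y) := Nat.coprime_comm.mp hg
  obtain ⟨a, -, ha⟩ := Nat.exists_mul_mod_eq_one_of_coprime hco hoy
  have hya : y = x ^ a := by
    rw [← h, ← pow_mul, ← pow_mod_orderOf, ha, pow_one]
  rw [hya]
  exact Subgroup.pow_mem _ (Subgroup.mem_zpowers x) a

lemma InN.inv {g : R} (hg : InN g) : InN g⁻¹ := by
  intro x
  set y := g⁻¹ * x * g with hy
  have hc : g * y * g⁻¹ = x := by rw [hy]; group
  have hx : x ∈ Subgroup.zpowers y := hc ▸ hg y
  obtain ⟨t, ht⟩ := mem_zpowers_nat hx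
  have ho : orderOf x = orderOf y := by
    rw [← hc]
    have : g * y * g⁻¹ = (MulAut.conj g) y := by simp [MulAut.conj_apply]
    rw [this]
    exact orderOf_injective (MulAut.conj g).toMonoidHom (MulEquiv.injective _) y
  have : y ∈ Subgroup.zpowers x := zpowers_of_pow_eq t ht ho
  simpa [hy, mul_assoc] using this

lemma InN.pow {g : R} (hg : InN g) (n : ℕ) : InN (g ^ n) := by
  induction n with
  | zero => intro x; simpa using Subgroup.mem_zpowers x
  | succ n ih => rw [pow_succ]; exact ih.mul hg

end Stmt13


set_option linter.unusedSectionVars false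
set_option maxHeartbeats 1000000

namespace Stmt13X

variable {R : Type*} [Group R] [Finite R]

-- membership of elements of zpowers with small order
lemma zpowers_sq {y w : R} (h2 : y * y = 1) (hw : w ∈ Subgroup.zpowers y) :
    w = 1 ∨ w = y := by
  obtain ⟨n, hn⟩ := Stmt13.mem_zpowers_nat hw
  have h2' : y ^ 2 = 1 := by rw [pow_two]; exact h2
  have hmod : y ^ n = y ^ (n % 2) := by
    conv_lhs => rw [← Nat.mod_add_div n 2, pow_add, pow_mul, h2', one_pow, mul_one]
  rw [hmod] at hn
  have hlt : n % 2 < 2 := Nat.mod_lt _ (by norm_num)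
  interval_cases h : n % 2
  · left; rw [← hn, pow_zero]
  · right; rw [← hn, pow_one]

lemma zpowers_fourth {y w : R} (h4 : y ^ 4 = 1) (hw : w ∈ Subgroup.zpowers y) :
    w = 1 ∨ w = y ∨ w = y ^ 2 ∨ w = y ^ 3 := by
  obtain ⟨n, hn⟩ := Stmt13.mem_zpowers_nat hw
  have hmod : y ^ n = y ^ (n % 4) := by
    conv_lhs => rw [← Nat.mod_add_div n 4, pow_add, pow_mul, h4, one_pow, mul_one]
  rw [hmod] at hn
  have hlt : n % 4 < 4 := Nat.mod_lt _ (by norm_num)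
  interval_cases h : n % 4
  · left; rw [← hn, pow_zero]
  · right; left; rw [← hn, pow_one]
  · right; right; left; rw [← hn]
  · right; right; right; rw [← hn]

/-- in a cyclic 2-group there is a unique involution, namely `x ^ 2^(d-1)`. -/
lemma invol_unique {x g : R} {d : ℕ} (hx : orderOf x = 2 ^ d)
    (hg : g ∈ Subgroup.zpowers x) (h2 : g * g = 1) (h1 : g ≠ 1) :
    1 ≤ d ∧ g = x ^ 2 ^ (d - 1) := by
  obtain ⟨i, hi⟩ := Stmt13.mem_zpowers_nat hg
  have hsq : x ^ (2 * i) = 1 := by rw [two_mul, pow_add, hi]; exact h2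
  have hdvd : 2 ^ d ∣ 2 * i := by rw [← hx]; exact orderOf_dvd_of_pow_eq_one hsq
  have hndvd : ¬ 2 ^ d ∣ i := by
    intro hc
    apply h1
    rw [← hi]
    exact orderOf_dvd_iff_pow_eq_one.mp (hx ▸ hc)
  have hd1 : 1 ≤ d := by
    by_contra hd
    push_neg at hd
    interval_cases d
    · simp at hndvd
  have hdd : (2:ℕ) ^ d = 2 ^ (d-1) * 2 := by
    rw [← pow_succ]; congr 1; omega
  refine ⟨hd1, ?_⟩
  obtain ⟨q, hq⟩ := hdvd
  have hiq : i = 2 ^ (d - 1) * q := by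
    have h2 : 2*i = 2*(2^(d-1)*q) := by rw [hq, hdd]; ring
    omega
  have hqodd : q % 2 = 1 := by
    rcases Nat.even_or_odd q with he | ho
    · obtain ⟨q', rfl⟩ := he
      exfalso; apply hndvd
      refine ⟨q', ?_⟩
      rw [hiq, hdd]; ring
    · exact Nat.odd_iff.mp ho
  rw [← hi, hiq, pow_mul]
  have hbase : (x ^ 2 ^ (d-1)) ^ 2 = 1 := by
    rw [← pow_mul, ← hdd, ← hx, pow_orderOf_eq_one]
  conv_lhs => rw [← Nat.mod_add_div q 2, pow_add, pow_mul, hbase, one_pow, mul_one, hqodd, pow_one]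

/-- decomposition of the exponent giving an order-p element of a cyclic p-group -/
lemma ord_decomp {g w : R} {p γ : ℕ} (hp : p.Prime) (ho : orderOf g = p ^ γ)
    {s : ℕ} (hw : g ^ s = w) (hwo : orderOf w = p) :
    1 ≤ γ ∧ (p ^ (γ - 1)) ∣ s ∧ ¬ (p ^ γ ∣ s) ∧
      orderOf (g ^ (p ^ (γ-1))) = p ∧ g ^ (p ^ (γ-1)) ∈ Subgroup.zpowers w := by
  have hop : orderOf (g ^ s) = p := by rw [hw, hwo]
  rw [orderOf_pow, ho] at hop
  have hγ1 : 1 ≤ γ := by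
    rcases Nat.eq_zero_or_pos γ with rfl | h
    · exfalso
      rw [pow_zero, Nat.gcd_one_left, Nat.div_one] at hop
      have := hp.one_lt; omega
    · exact h
  have hgcd_dvd : (p ^ γ).gcd s ∣ p ^ γ := Nat.gcd_dvd_left _ _
  have hgcd_pos : 0 < (p ^ γ).gcd s :=
    Nat.gcd_pos_of_pos_left s (Nat.pow_pos (n := γ) hp.pos)
  have hkey : (p ^ γ).gcd s * p = p ^ γ := by
    have h := Nat.div_mul_cancel hgcd_dvd
    rw [hop] at h
    rw [mul_comm]; exact h
  have hgcd : (p ^ γ).gcd s = p ^ (γ - 1) := by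
    have h2 : p ^ (γ-1) * p = p ^ γ := by
      rw [← pow_succ]; congr 1; omega
    have := hkey.trans h2.symm
    exact Nat.eq_of_mul_eq_mul_right hp.pos this
  have hdvd_s : p ^ (γ-1) ∣ s := hgcd ▸ Nat.gcd_dvd_right (p^γ) s
  have hndvd : ¬ (p ^ γ ∣ s) := by
    intro hc
    have hh : p ^ γ ∣ (p ^ γ).gcd s := Nat.dvd_gcd dvd_rfl hc
    rw [hgcd] at hh
    have h1 := Nat.le_of_dvd (Nat.pow_pos hp.pos) hh
    have h2 : p ^ (γ-1) < p ^ γ := Nat.pow_lt_pow_right hp.one_lt (by omega)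
    omega
  have hoζ : orderOf (g ^ (p ^ (γ-1))) = p := by
    rw [orderOf_pow, ho]
    have hg2 : (p ^ γ).gcd (p ^ (γ-1)) = p ^ (γ-1) :=
      Nat.gcd_eq_right (pow_dvd_pow p (by omega))
    rw [hg2, Nat.pow_div (by omega) hp.pos, show γ-(γ-1) = 1 by omega, pow_one]
  refine ⟨hγ1, hdvd_s, hndvd, hoζ, ?_⟩
  obtain ⟨s', hs'⟩ := hdvd_s
  have hwζ : (g ^ (p ^ (γ-1))) ^ s' = w := by rw [← pow_mul, ← hs', hw]
  exact Stmt13.zpowers_of_pow_eq s' hwζ (by rw [hwo, hoζ])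

end Stmt13X


set_option linter.unusedSectionVars false
set_option maxHeartbeats 1000000

namespace Stmt13Y
open Stmt13

variable {R : Type*} [Group R] [Finite R]

lemma comm_mem_right {g k : R} (hg : InN g) (_hk : InN k) :
    g*k*g⁻¹*k⁻¹ ∈ Subgroup.zpowers k := by
  exact Subgroup.mul_mem _ (hg k) (Subgroup.inv_mem _ (Subgroup.mem_zpowers k))

lemma comm_mem_left {g k : R} (_hg : InN g) (hk : InN k) :
    g*k*g⁻¹*k⁻¹ ∈ Subgroup.zpowers g := by
  have h : g*k*g⁻¹*k⁻¹ = g * (k*g*k⁻¹)⁻¹ := by group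
  rw [h]
  exact Subgroup.mul_mem _ (Subgroup.mem_zpowers g) (Subgroup.inv_mem _ (hk g))

lemma comm_central {g k : R} (hg : InN g) (hk : InN k) (x : R) :
    Commute (g*k*g⁻¹*k⁻¹) x := by
  obtain ⟨m, hm⟩ := Subgroup.mem_zpowers_iff.mp (hg x)
  obtain ⟨n, hn⟩ := Subgroup.mem_zpowers_iff.mp (hk x)
  obtain ⟨m', hm'⟩ := Subgroup.mem_zpowers_iff.mp (hg.inv x)
  obtain ⟨n', hn'⟩ := Subgroup.mem_zpowers_iff.mp (hk.inv x)
  rw [inv_inv] at hm' hn'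
  have e1 : ∀ t : ℤ, g * x^t * g⁻¹ = x^(m*t) := by
    intro t; rw [Stmt13.conj_zpow, ← hm, zpow_mul]
  have e2 : ∀ t : ℤ, k * x^t * k⁻¹ = x^(n*t) := by
    intro t; rw [Stmt13.conj_zpow, ← hn, zpow_mul]
  have e1' : ∀ t : ℤ, g⁻¹ * x^t * g = x^(m'*t) := by
    intro t
    have := Stmt13.conj_zpow g⁻¹ x t
    rw [inv_inv] at this
    rw [this, ← hm', zpow_mul]
  have e2' : ∀ t : ℤ, k⁻¹ * x^t * k = x^(n'*t) := by
    intro t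
    have := Stmt13.conj_zpow k⁻¹ x t
    rw [inv_inv] at this
    rw [this, ← hn', zpow_mul]
  have rel1 : x ^ (m*m') = x := by
    have h : g * (g⁻¹ * x * g) * g⁻¹ = x := by group
    have h2 : g⁻¹ * x * g = x ^ (m' * (1:ℤ)) := by rw [← e1' 1, zpow_one]
    rw [h2] at h
    rw [e1 (m' * 1)] at h
    rw [← h]; congr 1; ring
  have rel2 : x ^ (n*n') = x := by
    have h : k * (k⁻¹ * x * k) * k⁻¹ = x := by group
    have h2 : k⁻¹ * x * k = x ^ (n' * (1:ℤ)) := by rw [← e2' 1, zpow_one]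
    rw [h2] at h
    rw [e2 (n' * 1)] at h
    rw [← h]; congr 1; ring
  have key : (g*k*g⁻¹*k⁻¹) * x * (g*k*g⁻¹*k⁻¹)⁻¹ = x := by
    have hsh : (g*k*g⁻¹*k⁻¹) * x * (g*k*g⁻¹*k⁻¹)⁻¹
        = g*(k*(g⁻¹*(k⁻¹*x*k)*g)*k⁻¹)*g⁻¹ := by group
    rw [hsh]
    have s1 : k⁻¹*x*k = x ^ (n' * (1:ℤ)) := by rw [← e2' 1, zpow_one]
    rw [s1, e1' _, e2 _, e1 _]
    have : (m * (n * (m' * (n' * 1)))) = (m*m') * (n*n') := by ring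
    rw [this, zpow_mul, rel1, rel2]
  have : (g*k*g⁻¹*k⁻¹) * x = x * (g*k*g⁻¹*k⁻¹) := by
    calc (g*k*g⁻¹*k⁻¹) * x = ((g*k*g⁻¹*k⁻¹) * x * (g*k*g⁻¹*k⁻¹)⁻¹) * (g*k*g⁻¹*k⁻¹) := by group
    _ = x * (g*k*g⁻¹*k⁻¹) := by rw [key]
  exact this

end Stmt13Y


set_option linter.unusedSectionVars false
set_option maxHeartbeats 1000000

namespace Stmt13Z
open Stmt13 Stmt13X

variable {R : Type*} [Group R] [Finite R]

lemma commute_of_mem_zpowers {x w : R} (h : w ∈ Subgroup.zpowers x) : Commute x w := by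
  obtain ⟨k, hk⟩ := Subgroup.mem_zpowers_iff.mp h
  rw [← hk]
  exact (Commute.refl x).zpow_right k

lemma eq_one_of_odd_pow {w : R} {e i : ℕ} (he : orderOf w = 2 ^ e)
    (hi : w ^ i = 1) (hodd : i % 2 = 1) : w = 1 := by
  have hdvd : 2 ^ e ∣ i := he ▸ orderOf_dvd_of_pow_eq_one hi
  have he0 : e = 0 := by
    by_contra hc
    have h2 : 2 ∣ 2 ^ e := dvd_pow_self 2 hc
    have h2i : 2 ∣ i := h2.trans hdvd
    omega
  rw [he0, pow_zero] at he
  exact orderOf_eq_one_iff.mp he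


lemma pow_four_eq (g : R) : g ^ 4 = (g*g)*(g*g) := by
  rw [show (4:ℕ) = 2*2 from rfl, pow_mul, pow_two, pow_two]

lemma pow_three_eq (g : R) : g ^ 3 = (g*g)*g := by
  rw [pow_succ, pow_two]

lemma orderOf_eq_four {g z : R} (h2 : g*g = z) (hz1 : z ≠ 1) (hz2 : z*z = 1) :
    orderOf g = 4 := by
  have h4 : g ^ 4 = 1 := by
    rw [pow_four_eq, h2, hz2]
  have hdvd : orderOf g ∣ 4 := orderOf_dvd_of_pow_eq_one h4
  have hle : orderOf g ≤ 4 := Nat.le_of_dvd (by norm_num) hdvd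
  have hpos : 0 < orderOf g := orderOf_pos g
  have hg1 : g ≠ 1 := by rintro rfl; rw [mul_one] at h2; exact hz1 h2.symm
  have hgsq : g ^ 2 ≠ 1 := by rw [pow_two, h2]; exact hz1
  interval_cases h : orderOf g
  · exact absurd (orderOf_eq_one_iff.mp h) hg1
  · exact absurd (h ▸ pow_orderOf_eq_one g) hgsq
  · exact absurd hdvd (by norm_num)
  · rfl

lemma F3 {q z : R} (x : R) (hq : InN q) (hq2 : q*q = z) (hz1 : z ≠ 1) (hz2 : z*z = 1)
    (hzc : ∀ w : R, Commute z w) :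
    (x * (q*x*q⁻¹)⁻¹) * (x * (q*x*q⁻¹)⁻¹) = 1 ∨
    (x * (q*x*q⁻¹)⁻¹) * (x * (q*x*q⁻¹)⁻¹) = z := by
  have hzinv : z⁻¹ = z := inv_eq_of_mul_eq_one_right hz2
  set x₁ := q*x*q⁻¹ with hx₁def
  set r := x * x₁⁻¹ with hrdef
  have hx₁X : x₁ ∈ Subgroup.zpowers x := hq x
  have hrX : r ∈ Subgroup.zpowers x :=
    Subgroup.mul_mem _ (Subgroup.mem_zpowers x) (Subgroup.inv_mem _ hx₁X)
  have hcr : Commute x r := commute_of_mem_zpowers hrX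
  have hqx₁ : q*x₁*q⁻¹ = x := by
    have h1 : q*x₁*q⁻¹ = (q*q)*x*(q*q)⁻¹ := by rw [hx₁def]; group
    rw [h1, hq2]
    calc z*x*z⁻¹ = x*z*z⁻¹ := by rw [(hzc x).eq]
    _ = x := by group
  have hqr : q*r*q⁻¹ = r⁻¹ := by
    have h1 : q*r*q⁻¹ = (q*x*q⁻¹)*(q*x₁*q⁻¹)⁻¹ := by rw [hrdef]; group
    rw [h1, hqx₁, ← hx₁def, hrdef]
    group
  set y := x*q*x⁻¹ with hydef
  have hyrq : y = r*q := by rw [hydef, hrdef, hx₁def]; group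
  have hy2 : y*y = z := by
    have h : y*y = x*(q*q)*x⁻¹ := by rw [hydef]; group
    rw [h, hq2]
    calc x*z*x⁻¹ = z*x*x⁻¹ := by rw [← (hzc x).eq]
    _ = z := by group
  have hy4 : y ^ 4 = 1 := by
    rw [pow_four_eq, hy2, hz2]
  have hQ : q*y*q⁻¹ = r⁻¹*q := by
    have h1 : q*y*q⁻¹ = (q*r*q⁻¹)*(q*q*q⁻¹) := by rw [hyrq]; group
    rw [h1, hqr]
    congr 1
    group
  -- helper : if q commutes with x then r = 1
  have hcomm_imp : Commute x q → r = 1 := by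
    intro hcq
    have hx1 : x₁ = x := by rw [hx₁def, ← hcq.eq]; group
    rw [hrdef, hx1]; group
  have hymem := hq y
  rw [hQ] at hymem
  rcases zpowers_fourth hy4 hymem with hc | hc | hc | hc
  · -- r⁻¹ q = 1 : q = r, so q commutes with x, r = 1, q = 1, z = 1 : contradiction
    exfalso
    have hqr' : q = r := by
      have h2 : r * (r⁻¹ * q) = r * 1 := by rw [hc]
      simpa using h2
    have hcq : Commute x q := hqr' ▸ hcr
    have hr1 : r = 1 := hcomm_imp hcq
    apply hz1
    rw [← hq2, hqr', hr1, one_mul]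
  · -- r⁻¹ q = y = r q : r⁻¹ = r : r*r = 1
    left
    rw [hyrq] at hc
    have h1 : r⁻¹ = r := mul_right_cancel hc
    calc r*r = r*r⁻¹ := by rw [h1]
    _ = 1 := by group
  · -- r⁻¹ q = y² = z : q = r z : commutes, r = 1
    left
    have hy2' : y ^ 2 = z := by rw [pow_two, hy2]
    rw [hy2'] at hc
    have hqrz : q = r * z := by
      calc q = r * (r⁻¹ * q) := by group
      _ = r * z := by rw [hc]
    have hcq : Commute x q := by
      rw [hqrz]
      exact hcr.mul_right (hzc x).symm
    have hr1 : r = 1 := hcomm_imp hcq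
    rw [hr1, one_mul]
  · -- r⁻¹ q = y³ = z y = z r q : r⁻¹ = z r : r*r = z
    right
    have hy3' : y ^ 3 = z * y := by
      rw [pow_three_eq, hy2]
    rw [hy3', hyrq] at hc
    have h1 : r⁻¹ = z * r := by
      have h2 : r⁻¹ * q = (z*r) * q := by rw [hc]; group
      exact mul_right_cancel h2
    have h3 : (1:R) = r * (z * r) := by rw [← h1]; group
    have h4 : (1:R) = z * (r * r) := by
      rw [h3]
      calc r * (z*r) = (r*z)*r := by group
      _ = (z*r)*r := by rw [← (hzc r).eq]
      _ = z * (r*r) := by group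
    calc r*r = (z*z)*(r*r) := by rw [hz2, one_mul]
    _ = z * (z * (r*r)) := by group
    _ = z * 1 := by rw [← h4]
    _ = z := by rw [mul_one]

end Stmt13Z


set_option linter.unusedSectionVars false
set_option maxHeartbeats 1000000

namespace Stmt13Z
open Stmt13 Stmt13X

variable {R : Type*} [Group R] [Finite R]

lemma zpow_parity {z : R} (hz2 : z*z = 1) (n : ℕ) :
    (n % 2 = 0 ∧ z^n = 1) ∨ (n % 2 = 1 ∧ z^n = z) := by
  have h2 : z ^ 2 = 1 := by rw [pow_two]; exact hz2
  have hmod : z ^ n = z ^ (n % 2) := by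
    conv_lhs => rw [← Nat.mod_add_div n 2, pow_add, pow_mul, h2, one_pow, mul_one]
  have hlt : n % 2 < 2 := Nat.mod_lt _ (by norm_num)
  interval_cases h : n % 2
  · left; exact ⟨rfl, by rw [hmod, pow_zero]⟩
  · right; exact ⟨rfl, by rw [hmod, pow_one]⟩

lemma orderOf_eq_two {z : R} (hz2 : z*z = 1) (hz1 : z ≠ 1) : orderOf z = 2 := by
  have h2 : z ^ 2 = 1 := by rw [pow_two]; exact hz2
  have hdvd := orderOf_dvd_of_pow_eq_one h2
  have hle : orderOf z ≤ 2 := Nat.le_of_dvd (by norm_num) hdvd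
  have hpos := orderOf_pos z
  interval_cases h : orderOf z
  · exact absurd (orderOf_eq_one_iff.mp h) hz1
  · rfl

lemma dichotomy {p : ℕ} (hp : p.Prime) (hpR : IsPGroup p R)
    {u v z : R} (hu : InN u) (hv : InN v) (hu2 : u*u = z) (hv2 : v*v = z)
    (hz1 : z ≠ 1) (hz2 : z*z = 1) (hzc : ∀ w : R, Commute z w)
    (hvu : v*u*v⁻¹ = u⁻¹) (x : R) :
    x*u*x⁻¹ = u ∨ x*u*x⁻¹ = u⁻¹ := by
  haveI : Fact (Nat.Prime 2) := ⟨Nat.prime_two⟩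
  haveI : Fact (Nat.Prime p) := ⟨hp⟩
  have hzinv : z⁻¹ = z := inv_eq_of_mul_eq_one_right hz2
  have hz_ord : orderOf z = 2 := orderOf_eq_two hz2 hz1
  have hp2 : p = 2 := by
    obtain ⟨k, hk⟩ := (IsPGroup.iff_orderOf.mp hpR) z
    rw [hz_ord] at hk
    rcases Nat.eq_zero_or_pos k with rfl | hkpos
    · simp at hk
    · have hdvd : p ∣ 2 := by
        rw [hk]; exact dvd_pow_self p (by omega)
      exact (Nat.prime_dvd_prime_iff_eq hp Nat.prime_two).mp hdvd
  have horder : ∀ w : R, ∃ e : ℕ, orderOf w = 2 ^ e := by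
    intro w
    obtain ⟨e, he⟩ := (IsPGroup.iff_orderOf.mp hpR) w
    exact ⟨e, by rw [he, hp2]⟩
  have huinv : u⁻¹ = z*u := by
    have h4 : u ^ 4 = 1 := by rw [pow_four_eq, hu2, hz2]
    have h5 : u * u ^ 3 = 1 := by
      rw [← pow_succ']; exact h4
    have h6 : u⁻¹ = u ^ 3 := inv_eq_of_mul_eq_one_right h5
    rw [h6, pow_three_eq, hu2]
  set x' := u*x*u⁻¹ with hx'def
  set g := x * x'⁻¹ with hgdef
  have hx'X : x' ∈ Subgroup.zpowers x := hu x
  have hgX : g ∈ Subgroup.zpowers x :=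
    Subgroup.mul_mem _ (Subgroup.mem_zpowers x) (Subgroup.inv_mem _ hx'X)
  have hcg : Commute x g := commute_of_mem_zpowers hgX
  have hcxx' : Commute x x' := commute_of_mem_zpowers hx'X
  have hxux : x*u*x⁻¹ = g*u := by rw [hgdef, hx'def]; group
  suffices hgoal : g = 1 ∨ g = z by
    rcases hgoal with h | h
    · left; rw [hxux, h, one_mul]
    · right; rw [hxux, h, ← huinv]
  by_contra hcon
  push_neg at hcon
  obtain ⟨hg1, hgz⟩ := hcon
  have hux' : u*x'*u⁻¹ = x := by
    have h1 : u*x'*u⁻¹ = (u*u)*x*(u*u)⁻¹ := by rw [hx'def]; group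
    rw [h1, hu2]
    calc z*x*z⁻¹ = x*z*z⁻¹ := by rw [(hzc x).eq]
    _ = x := by group
  have hug : u*g*u⁻¹ = g⁻¹ := by
    have h1 : u*g*u⁻¹ = (u*x*u⁻¹)*(u*x'*u⁻¹)⁻¹ := by rw [hgdef]; group
    rw [h1, hux', ← hx'def, hgdef]
    group
  have hx'g : x' = g⁻¹ * x := by rw [hgdef]; group
  set s := x*u with hsdef
  have hsu : u*s*u⁻¹ = g⁻¹ * s := by
    have h1 : u*s*u⁻¹ = (u*x*u⁻¹) * u := by rw [hsdef]; group
    rw [h1, ← hx'def, hx'g, hsdef]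
    group
  have hgs : g ∈ Subgroup.zpowers s := by
    have h1 : g⁻¹ = (u*s*u⁻¹) * s⁻¹ := by rw [hsu]; group
    have h2 : g⁻¹ ∈ Subgroup.zpowers s :=
      h1 ▸ Subgroup.mul_mem _ (hu s) (Subgroup.inv_mem _ (Subgroup.mem_zpowers s))
    have h3 := Subgroup.inv_mem _ h2
    rwa [inv_inv] at h3
  set w := x * x' with hwdef
  have hwX : w ∈ Subgroup.zpowers x :=
    Subgroup.mul_mem _ (Subgroup.mem_zpowers x) hx'X
  have hcw : Commute x w := commute_of_mem_zpowers hwX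
  have hss : s*s = w*z := by
    have h1 : s*s = x*(u*x*u⁻¹)*(u*u) := by rw [hsdef]; group
    rw [h1, ← hx'def, hu2, hwdef]
  have hwu : u*w*u⁻¹ = w := by
    have h1 : u*w*u⁻¹ = (u*x*u⁻¹)*(u*x'*u⁻¹) := by rw [hwdef]; group
    rw [h1, hux', ← hx'def, hwdef, ← hcxx'.eq]
  have hcwz : Commute w z := (hzc w).symm
  have parse : ∀ e : R, Commute x e → ∀ kk : ℕ, s ^ kk = e →
      ∃ j : ℕ, kk = 2*j ∧ e = w^j * z^j := by
    intro e hce kk hkk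
    rcases Nat.even_or_odd kk with ⟨j, hj⟩ | ⟨j, hj⟩
    · refine ⟨j, by omega, ?_⟩
      rw [← hkk, hj, show j + j = 2*j by ring, pow_mul, pow_two, hss, hcwz.mul_pow]
    · exfalso
      have hval : e = (w^j * z^j) * (x * u) := by
        rw [← hkk, hj, pow_succ, pow_mul, pow_two, hss, hcwz.mul_pow, hsdef]
      have huval : u = (w^j * z^j * x)⁻¹ * e := by rw [hval]; group
      have hcu : Commute x u := by
        rw [huval]
        have c1 : Commute x (w^j * z^j * x) :=
          ((hcw.pow_right j).mul_right ((hzc x).symm.pow_right j)).mul_right (Commute.refl x)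
        exact (c1.inv_right).mul_right hce
      apply hg1
      have hx1 : x' = x := by rw [hx'def, ← hcu.eq]; group
      rw [hgdef, hx1]
      group
  have hgg := F3 x hu hu2 hz1 hz2 hzc
  rw [← hx'def, ← hgdef] at hgg
  rcases hgg with hB | hA
  · -- case B : g*g = 1
    obtain ⟨d, hd⟩ := horder x
    by_cases hzX : z ∈ Subgroup.zpowers x
    · have h1 := invol_unique hd hgX hB hg1
      have h2 := invol_unique hd hzX hz2 hz1
      exact hgz (h1.2.trans h2.2.symm)
    · -- case B2 : z ∉ zpowers x
      have hginv : g⁻¹ = g := inv_eq_of_mul_eq_one_right hB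
      set x'' := v*x*v⁻¹ with hx''def
      set h := x * x''⁻¹ with hhdef
      have hx''X : x'' ∈ Subgroup.zpowers x := hv x
      have hhX : h ∈ Subgroup.zpowers x :=
        Subgroup.mul_mem _ (Subgroup.mem_zpowers x) (Subgroup.inv_mem _ hx''X)
      have hh2 := F3 x hv hv2 hz1 hz2 hzc
      rw [← hx''def, ← hhdef] at hh2
      have hh1 : h*h = 1 := by
        rcases hh2 with h' | h'
        · exact h'
        · exact absurd (h' ▸ Subgroup.mul_mem _ hhX hhX) hzX
      have hhg : h = 1 ∨ h = g := by
        by_cases hh0 : h = 1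
        · exact Or.inl hh0
        · right
          have h1 := invol_unique hd hhX hh1 hh0
          have h2 := invol_unique hd hgX hB hg1
          rw [h1.2, ← h2.2]
      have hx''h : x'' = h⁻¹ * x := by rw [hhdef]; group
      have hsv : v*s*v⁻¹ = (h⁻¹ * z) * s := by
        have h1 : v*s*v⁻¹ = (v*x*v⁻¹)*(v*u*v⁻¹) := by rw [hsdef]; group
        rw [h1, hvu, ← hx''def, huinv, hx''h, hsdef]
        calc h⁻¹ * x * (z*u) = h⁻¹ * (x*z) * u := by group
        _ = h⁻¹ * (z*x) * u := by rw [← (hzc x).eq]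
        _ = h⁻¹ * z * (x*u) := by group
      have hhzs : (h⁻¹ * z) ∈ Subgroup.zpowers s := by
        have h1 : h⁻¹ * z = (v*s*v⁻¹) * s⁻¹ := by rw [hsv]; group
        rw [h1]
        exact Subgroup.mul_mem _ (hv s) (Subgroup.inv_mem _ (Subgroup.mem_zpowers s))
      obtain ⟨k₁, hk₁⟩ := mem_zpowers_nat hgs
      obtain ⟨j, hj, hgval⟩ := parse g hcg k₁ hk₁
      have hzj : z^j = 1 ∧ g = w^j := by
        have hmem : z^j ∈ Subgroup.zpowers x := by
          have h1 : z^j = (w^j)⁻¹ * g := by rw [hgval]; group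
          rw [h1]
          exact Subgroup.mul_mem _ (Subgroup.inv_mem _ (Subgroup.pow_mem _ hwX j)) hgX
        rcases zpow_parity hz2 j with ⟨_, h0⟩ | ⟨_, h1⟩
        · exact ⟨h0, by rw [hgval, h0, mul_one]⟩
        · exact absurd (h1 ▸ hmem) hzX
      have hcxhz : Commute x (h⁻¹ * z) :=
        ((commute_of_mem_zpowers hhX).inv_right).mul_right (hzc x).symm
      obtain ⟨k₂, hk₂⟩ := mem_zpowers_nat hhzs
      obtain ⟨i, hi, hhzval⟩ := parse (h⁻¹*z) hcxhz k₂ hk₂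
      obtain ⟨e, he⟩ := horder w
      rcases hhg with hcase | hcase
      · -- h = 1 : z = w^i * z^i
        have hzval : z = w^i * z^i := by
          rw [← hhzval, hcase, inv_one, one_mul]
        rcases zpow_parity hz2 i with ⟨_, h0⟩ | ⟨hio, h1⟩
        · exact absurd (by rw [hzval, h0, mul_one]; exact Subgroup.pow_mem _ hwX i) hzX
        · have hwi : w^i = 1 := by
            have h1' : z = w^i * z := by conv_lhs => rw [hzval, h1]
            have h2 : w^i * z = 1 * z := by rw [one_mul]; exact h1'.symm
            exact mul_right_cancel h2
          have hw1 : w = 1 := eq_one_of_odd_pow he hwi hio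
          exact hg1 (by rw [hzj.2, hw1, one_pow])
      · -- h = g : g * z = w^i * z^i
        have hgzval : g * z = w^i * z^i := by rw [← hhzval, hcase, hginv]
        rcases zpow_parity hz2 i with ⟨_, h0⟩ | ⟨hio, h1⟩
        · apply hzX
          have h3 : g * z = w ^ i := by rw [hgzval, h0, mul_one]
          have h2 : z = g⁻¹ * w^i := by rw [← h3]; group
          rw [h2]
          exact Subgroup.mul_mem _ (Subgroup.inv_mem _ hgX) (Subgroup.pow_mem _ hwX i)
        · have hgwi : g = w^i := by
            have h2 : g * z = w^i * z := by rw [hgzval, h1]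
            exact mul_right_cancel h2
          have hjeven : j % 2 = 0 := by
            rcases zpow_parity hz2 j with ⟨h', _⟩ | ⟨_, h'⟩
            · exact h'
            · exact absurd (h' ▸ hzj.1) hz1
          -- w^i = w^j with i odd, j even : w = 1
          have hwij : w^i = w^j := by rw [← hgwi, hzj.2]
          have hw1 : w = 1 := by
            rcases le_total i j with hle | hle
            · have h3 : w ^ (j - i) * w ^ i = 1 * w ^ i := by
                rw [← pow_add, Nat.sub_add_cancel hle, one_mul, ← hwij]
              exact eq_one_of_odd_pow he (mul_right_cancel h3) (by omega)
            · have h3 : w ^ (i - j) * w ^ j = 1 * w ^ j := by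
                rw [← pow_add, Nat.sub_add_cancel hle, one_mul, hwij]
              exact eq_one_of_odd_pow he (mul_right_cancel h3) (by omega)
          exact hg1 (by rw [hzj.2, hw1, one_pow])
  · -- case A : g*g = z
    obtain ⟨k₁, hk₁⟩ := mem_zpowers_nat hgs
    obtain ⟨j, hj, hgval⟩ := parse g hcg k₁ hk₁
    obtain ⟨T, hT⟩ : ∃ T : R, g^(2*j) = T := ⟨_, rfl⟩
    have hzj : z^j = T := by
      rw [← hT, ← hA, pow_mul, pow_two]
    have hwj : w^j = g * T⁻¹ := by
      have h1 : g = w^j * T := by rw [hgval, hzj]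
      rw [h1, mul_assoc, mul_inv_cancel, mul_one]
    have hl : u * w^j * u⁻¹ = w^j := by
      rw [Stmt13.conj_pow, hwu]
    have hrT : u * T * u⁻¹ = T⁻¹ := by
      rw [← hT, Stmt13.conj_pow, hug, inv_pow]
    have hr : u * (g * T⁻¹) * u⁻¹ = g⁻¹ * T := by
      have h1 : u * (g * T⁻¹) * u⁻¹ = (u*g*u⁻¹) * (u * T * u⁻¹)⁻¹ := by group
      rw [h1, hug, hrT, inv_inv]
    have hfin : g * T⁻¹ = g⁻¹ * T := by
      calc g * T⁻¹ = w^j := hwj.symm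
      _ = u * (w^j) * u⁻¹ := hl.symm
      _ = u * (g * T⁻¹) * u⁻¹ := by rw [← hwj]
      _ = g⁻¹ * T := hr
    have hgg4j : g * g = T * T := by
      calc g * g = g * (g * T⁻¹) * T := by group
      _ = g * (g⁻¹ * T) * T := by rw [hfin]
      _ = T * T := by group
    have hpow : g ^ 2 = g ^ (4*j) := by
      rw [pow_two, hgg4j, ← hT, ← pow_add]
      congr 1
      ring
    have ho4 : orderOf g = 4 := orderOf_eq_four hA hz1 hz2
    have hmod := pow_eq_pow_iff_modEq.mp hpow
    rw [ho4] at hmod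
    have h24 : 2 % 4 = (4*j) % 4 := hmod
    omega

end Stmt13Z


set_option linter.unusedSectionVars false
set_option maxHeartbeats 1000000

namespace Stmt13W
open Stmt13 Stmt13X Stmt13Y

variable {R : Type*} [Group R] [Finite R]

lemma q8_of_min {p : ℕ} (hp : p.Prime) (hpR : IsPGroup p R)
    {g k : R} (hg : InN g) (hk : InN k) (hgk : g*k ≠ k*g)
    (hle : orderOf g ≤ orderOf k)
    (hmin : ∀ g' k' : R, InN g' → InN k' → g'*k' ≠ k'*g' →
      orderOf g + orderOf k ≤ orderOf g' + orderOf k') :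
    ∃ u v z : R, InN u ∧ InN v ∧ u*u = z ∧ v*v = z ∧ z ≠ 1 ∧ z*z = 1 ∧
      (∀ w : R, Commute z w) ∧ v*u*v⁻¹ = u⁻¹ ∧ u*v ≠ v*u := by
  haveI : Fact (Nat.Prime p) := ⟨hp⟩
  set z := g*k*g⁻¹*k⁻¹ with hzdef
  have hz1 : z ≠ 1 := by
    intro hc
    apply hgk
    calc g*k = (g*k*g⁻¹*k⁻¹)*(k*g) := by group
    _ = k*g := by rw [← hzdef, hc, one_mul]
  have hzg : z ∈ Subgroup.zpowers g := comm_mem_left hg hk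
  have hzk : z ∈ Subgroup.zpowers k := comm_mem_right hg hk
  have hzc : ∀ x : R, Commute z x := fun x => comm_central hg hk x
  have hgne1 : g ≠ 1 := by
    intro hc; rw [hc] at hgk; exact hgk (by rw [one_mul, mul_one])
  have hkne1 : k ≠ 1 := by
    intro hc; rw [hc] at hgk; exact hgk (by rw [one_mul, mul_one])
  have hconj : g*k*g⁻¹ = z*k := by rw [hzdef]; group
  have hconjpow : ∀ i : ℕ, g*(k^i)*g⁻¹ = z^i * k^i := by
    intro i
    induction i with
    | zero => simp
    | succ m ih =>
      have h1 : g*(k^(m+1))*g⁻¹ = (g*(k^m)*g⁻¹)*(g*k*g⁻¹) := by rw [pow_succ]; group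
      rw [h1, ih, hconj]
      calc z^m * k^m * (z*k) = z^m * (k^m * z) * k := by group
      _ = z^m * (z * k^m) * k := by rw [← (hzc (k^m)).eq]
      _ = z^(m+1) * k^(m+1) := by rw [pow_succ, pow_succ]; group
  have hconjpow' : ∀ i : ℕ, (g^i)*k*(g^i)⁻¹ = z^i * k := by
    intro i
    induction i with
    | zero => simp
    | succ m ih =>
      have h1 : (g^(m+1))*k*(g^(m+1))⁻¹ = g*((g^m)*k*(g^m)⁻¹)*g⁻¹ := by
        rw [pow_succ']; group
      rw [h1, ih]
      have h2 : g*(z^m * k)*g⁻¹ = z^m * (g*k*g⁻¹) := by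
        have hcz : Commute (z^m) g := ((hzc g).pow_left m)
        calc g*(z^m * k)*g⁻¹ = (g*z^m*g⁻¹)*(g*k*g⁻¹) := by group
        _ = z^m * (g*k*g⁻¹) := by
            congr 1
            calc g*z^m*g⁻¹ = z^m*g*g⁻¹ := by rw [hcz.eq]
            _ = z^m := by group
      rw [h2, hconj]
      calc z^m * (z*k) = (z^m * z) * k := by group
      _ = z^(m+1) * k := by rw [pow_succ]
  obtain ⟨γ, hγ⟩ := (IsPGroup.iff_orderOf.mp hpR) z
  obtain ⟨α, hα⟩ := (IsPGroup.iff_orderOf.mp hpR) g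
  obtain ⟨β, hβ⟩ := (IsPGroup.iff_orderOf.mp hpR) k
  have hβ1 : 1 ≤ β := by
    rcases Nat.eq_zero_or_pos β with rfl | h
    · rw [pow_zero] at hβ; exact absurd (orderOf_eq_one_iff.mp hβ) hkne1
    · exact h
  -- orderOf z = p
  have hzp : orderOf z = p := by
    rcases Nat.lt_or_ge γ 2 with hγ2 | hγ2
    · have hγcase : γ = 0 ∨ γ = 1 := by omega
      rcases hγcase with h | h
      · rw [h, pow_zero] at hγ; exact absurd (orderOf_eq_one_iff.mp hγ) hz1
      · rw [h, pow_one] at hγ; exact hγ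
    · exfalso
      have hzp1 : z^p ≠ 1 := by
        intro hc
        have hd := orderOf_dvd_of_pow_eq_one hc
        rw [hγ] at hd
        have h1 := Nat.le_of_dvd hp.pos hd
        have h2 : p < p^γ := by
          calc p = p^1 := (pow_one p).symm
          _ < p^γ := Nat.pow_lt_pow_right hp.one_lt (by omega)
        omega
      have hnc : g*(k^p) ≠ (k^p)*g := by
        intro hc
        apply hzp1
        have h1 : g*(k^p)*g⁻¹ = k^p := by rw [hc]; group
        rw [hconjpow p] at h1
        have h2 : z^p * k^p = 1 * k^p := by rw [one_mul, h1]
        exact mul_right_cancel h2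
      have hkp : InN (k^p) := hk.pow p
      have hord : orderOf (k^p) = p^(β-1) := by
        rw [orderOf_pow, hβ]
        have hgcd : (p^β).gcd p = p := by
          have : p ∣ p^β := dvd_pow_self p (by omega)
          exact Nat.gcd_eq_right this
        rw [hgcd]
        conv_lhs => rw [show (p:ℕ)^β = p^(β-1) * p by rw [← pow_succ]; congr 1; omega]
        exact Nat.mul_div_cancel _ hp.pos
      have hmm := hmin g (k^p) hg hkp hnc
      rw [hord, hβ] at hmm
      have hlt : p^(β-1) < p^β := Nat.pow_lt_pow_right hp.one_lt (by omega)
      omega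
  obtain ⟨s, hs⟩ := mem_zpowers_nat hzg
  obtain ⟨t, ht⟩ := mem_zpowers_nat hzk
  have hps : p ∣ s := by
    have h1 := hconjpow' s
    rw [hs] at h1
    have h2 : z*k*z⁻¹ = k := by
      calc z*k*z⁻¹ = k*z*z⁻¹ := by rw [(hzc k).eq]
      _ = k := by group
    rw [h2] at h1
    have h3 : z^s * k = 1 * k := by rw [one_mul, ← h1]
    have h4 : z^s = 1 := mul_right_cancel h3
    have hd := orderOf_dvd_of_pow_eq_one h4
    rwa [hzp] at hd
  have hpt : p ∣ t := by
    have h1 := hconjpow t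
    rw [ht] at h1
    have h2 : g*z*g⁻¹ = z := by
      calc g*z*g⁻¹ = z*g*g⁻¹ := by rw [← (hzc g).eq]
      _ = z := by group
    rw [h2] at h1
    have h3 : z^t * z = 1 * z := by rw [one_mul, ← h1]
    have h4 : z^t = 1 := mul_right_cancel h3
    have hd := orderOf_dvd_of_pow_eq_one h4
    rwa [hzp] at hd
  obtain ⟨hα1', hαdvd, hαndvd, hζord, hζmem⟩ := ord_decomp hp hα hs hzp
  obtain ⟨hβ1', hβdvd, hβndvd, hηord, hηmem⟩ := ord_decomp hp hβ ht hzp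
  have hα2 : 2 ≤ α := by
    by_contra hc
    push_neg at hc
    have hcase : α = 0 ∨ α = 1 := by omega
    rcases hcase with h | h
    · rw [h, pow_zero] at hα; exact absurd (orderOf_eq_one_iff.mp hα) hgne1
    · rw [h, pow_one] at hαndvd; exact hαndvd hps
  have hβ2 : 2 ≤ β := by
    by_contra hc
    push_neg at hc
    have hcase : β = 0 ∨ β = 1 := by omega
    rcases hcase with h | h
    · rw [h, pow_zero] at hβ; exact absurd (orderOf_eq_one_iff.mp hβ) hkne1
    · rw [h, pow_one] at hβndvd; exact hβndvd hpt
  have hαβ : α ≤ β := by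
    rw [hα, hβ] at hle
    exact (Nat.pow_le_pow_iff_right hp.one_lt).mp hle
  by_cases hq : p = 2 ∧ α = 2 ∧ β = 2
  · -- the Q8 configuration
    obtain ⟨hp2, hA2, hB2⟩ := hq
    have hzz : z*z = 1 := by
      have h1 := pow_orderOf_eq_one z
      rw [hzp, hp2, pow_two] at h1
      exact h1
    have hg2 : g*g = z := by
      rcases zpowers_sq hzz hζmem with h | h
      · exfalso
        rw [h, orderOf_one] at hζord
        have := hp.one_lt
        omega
      · rw [hA2, hp2] at h
        norm_num at h
        rw [← pow_two]
        exact h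
    have hk2 : k*k = z := by
      rcases zpowers_sq hzz hηmem with h | h
      · exfalso
        rw [h, orderOf_one] at hηord
        have := hp.one_lt
        omega
      · rw [hB2, hp2] at h
        norm_num at h
        rw [← pow_two]
        exact h
    have hzinvrel : k*g*k⁻¹ = z*g := by
      have h1 : k*g*k⁻¹*g⁻¹ = z⁻¹ := by rw [hzdef]; group
      have h2 : z⁻¹ = z := inv_eq_of_mul_eq_one_right hzz
      calc k*g*k⁻¹ = (k*g*k⁻¹*g⁻¹)*g := by group
      _ = z*g := by rw [h1, h2]
    have hginv : z*g = g⁻¹ := by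
      have h4 : g*(z*g) = 1 := by
        calc g*(z*g) = (g*z)*g := by group
        _ = (z*g)*g := by rw [← (hzc g).eq]
        _ = z*(g*g) := by group
        _ = 1 := by rw [hg2, hzz]
      exact (inv_eq_of_mul_eq_one_right h4).symm
    exact ⟨g, k, z, hg, hk, hg2, hk2, hz1, hzz, hzc, by rw [hzinvrel, hginv], hgk⟩
  · -- otherwise : contradiction with minimality
    exfalso
    obtain ⟨nn, hnn⟩ := mem_zpowers_nat hηmem
    have hz_in : z ∈ Subgroup.zpowers (k^(p^(β-1))) :=
      zpowers_of_pow_eq nn hnn (by rw [hηord, hzp])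
    have hζinv_in : (g^(p^(α-1)))⁻¹ ∈ Subgroup.zpowers (k^(p^(β-1))) := by
      obtain ⟨mm, hmm⟩ := mem_zpowers_nat hζmem
      have h1 : g^(p^(α-1)) ∈ Subgroup.zpowers (k^(p^(β-1))) := by
        rw [← hmm]; exact Subgroup.pow_mem _ hz_in mm
      exact Subgroup.inv_mem _ h1
    obtain ⟨c, hc⟩ := mem_zpowers_nat hζinv_in
    set K := c * p^(β-α) with hKdef
    set x := g * k^K with hxdef
    set n := p^(α-1) with hndef
    have hnpos : 0 < n := by rw [hndef]; exact Nat.pow_pos hp.pos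
    have hmulrel : ∀ i : ℕ, (k^i) * g = (z^i)⁻¹ * (g * (k^i)) := by
      intro i
      have h1 := hconjpow i
      have h2 : g * (k^i) = z^i * (k^i * g) := by
        calc g*(k^i) = (g*(k^i)*g⁻¹)*g := by group
        _ = z^i * (k^i) * g := by rw [h1]
        _ = z^i * (k^i * g) := by group
      rw [h2]; group
    have hmove : ∀ (a : R) (i : ℕ), z^i * a = a * z^i :=
      fun a i => ((hzc a).pow_left i).eq
    have hmove' : ∀ (a : R) (i : ℕ), (z^i)⁻¹ * a = a * (z^i)⁻¹ :=
      fun a i => (((hzc a).pow_left i).inv_left).eq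
    have hform : ∀ m : ℕ, x^m * (z^K)^(m.choose 2) = g^m * k^(K*m) := by
      intro m
      induction m with
      | zero => simp
      | succ m ih =>
        have hC : (m+1).choose 2 = m.choose 2 + m := by
          rw [Nat.choose_succ_succ, Nat.choose_one_right]
          ring
        have hZ2 : (z^K)^m = z^(K*m) := by rw [← pow_mul]
        have hswap : x * (z^K)^(m.choose 2) = (z^K)^(m.choose 2) * x := by
          rw [← pow_mul]; exact (hmove x _).symm
        have step1 : x^(m+1) * (z^K)^((m+1).choose 2)
            = x^m * (z^K)^(m.choose 2) * x * z^(K*m) := by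
          rw [hC, pow_add (z^K) (m.choose 2) m, pow_succ x m, hZ2]
          calc x^m * x * ((z^K)^(m.choose 2) * z^(K*m))
              = x^m * ((x * (z^K)^(m.choose 2)) * z^(K*m)) := by simp only [mul_assoc]
          _ = x^m * (((z^K)^(m.choose 2) * x) * z^(K*m)) := by rw [hswap]
          _ = x^m * (z^K)^(m.choose 2) * x * z^(K*m) := by simp only [mul_assoc]
        rw [step1, ih, hxdef]
        have hkg := hmulrel (K*m)
        calc g^m * k^(K*m) * (g * k^K) * z^(K*m)
            = g^m * ((k^(K*m) * g) * (k^K * z^(K*m))) := by simp only [mul_assoc]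
        _ = g^m * (((z^(K*m))⁻¹ * (g * k^(K*m))) * (k^K * z^(K*m))) := by rw [hkg]
        _ = (g^m * (z^(K*m))⁻¹) * (g * (k^(K*m) * (k^K * z^(K*m)))) := by
              simp only [mul_assoc]
        _ = ((z^(K*m))⁻¹ * g^m) * (g * (k^(K*m) * (k^K * z^(K*m)))) := by
              rw [hmove' (g^m) (K*m)]
        _ = (z^(K*m))⁻¹ * ((g^m * g) * ((k^(K*m) * k^K) * z^(K*m))) := by
              simp only [mul_assoc]
        _ = (z^(K*m))⁻¹ * ((g^(m+1)) * (k^(K*m+K) * z^(K*m))) := by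
              rw [← pow_succ, ← pow_add]
        _ = (g^(m+1)) * ((z^(K*m))⁻¹ * (k^(K*m+K) * z^(K*m))) := by
              rw [← mul_assoc, hmove' (g^(m+1)) (K*m), mul_assoc]
        _ = (g^(m+1)) * (k^(K*m+K) * ((z^(K*m))⁻¹ * z^(K*m))) := by
              rw [← mul_assoc ((z^(K*m))⁻¹), hmove' (k^(K*m+K)) (K*m), mul_assoc]
        _ = (g^(m+1)) * k^(K*(m+1)) := by
              rw [inv_mul_cancel, mul_one, show K*m+K = K*(m+1) by ring]
    have hgn : g^n = g^(p^(α-1)) := by rw [hndef]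
    have hKn : K * n = p^(β-1) * c := by
      rw [hKdef, hndef, mul_assoc, ← pow_add, show β-α + (α-1) = β-1 by omega]
      ring
    have hkKn : k^(K*n) = (g^(p^(α-1)))⁻¹ := by
      rw [hKn, pow_mul]
      exact hc
    have h2dvd : 2 ∣ n * (n-1) := by
      have he : Even ((n-1) * (n-1+1)) := Nat.even_mul_succ_self (n-1)
      rw [Nat.sub_add_cancel hnpos] at he
      obtain ⟨a, ha⟩ := he
      exact ⟨a, by rw [mul_comm] at ha; omega⟩
    have h2C : 2 * n.choose 2 = n * (n-1) := by
      rw [Nat.choose_two_right]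
      exact Nat.mul_div_cancel' h2dvd
    have hdvdz : (z^K)^(n.choose 2) = 1 := by
      rw [← pow_mul]
      have hdv : p ∣ K * n.choose 2 := by
        rcases eq_or_ne p 2 with hp2 | hp2
        · by_cases hα3 : 3 ≤ α
          · apply Dvd.dvd.mul_left
            have hnn : n = 2^(α-1) := by rw [hndef, hp2]
            have hd1 : 2^(α-1) ∣ 2 * n.choose 2 := by
              rw [h2C, hnn]; exact dvd_mul_right _ _
            obtain ⟨q, hq⟩ := hd1
            have hCq : n.choose 2 = 2^(α-2) * q := by
              have h3 : 2 * n.choose 2 = 2 * (2^(α-2) * q) := by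
                rw [hq, show α-1 = 1 + (α-2) by omega, pow_add, pow_one]
                ring
              omega
            rw [hp2, hCq]
            exact Dvd.dvd.mul_right (dvd_pow_self 2 (by omega)) q
          · have hA2 : α = 2 := by omega
            have hB3 : 3 ≤ β := by
              rcases Nat.lt_or_ge β 3 with h | h
              · exact absurd ⟨hp2, hA2, by omega⟩ hq
              · exact h
            apply Dvd.dvd.mul_right
            rw [hKdef]
            exact Dvd.dvd.mul_left (dvd_pow_self p (by omega)) c
        · apply Dvd.dvd.mul_left
          have hpn : p ∣ n := by rw [hndef]; exact dvd_pow_self p (by omega)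
          have hp2C : p ∣ 2 * n.choose 2 := by
            rw [h2C]; exact hpn.mul_right (n-1)
          have hcop : Nat.Coprime p 2 := (Nat.coprime_primes hp Nat.prime_two).mpr hp2
          exact hcop.dvd_of_dvd_mul_left hp2C
      exact orderOf_dvd_iff_pow_eq_one.mp (hzp ▸ hdv)
    have hxn : x^n = 1 := by
      have h1 := hform n
      rw [hgn, hkKn, hdvdz, mul_one] at h1
      rw [h1, mul_inv_cancel]
    have hnc : x*k ≠ k*x := by
      intro hcm
      apply hz1
      have hckK : k^K * k = k * k^K := ((Commute.refl k).pow_left K).eq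
      have h1 : x*k*x⁻¹ = g*k*g⁻¹ := by
        rw [hxdef, mul_inv_rev]
        calc g * k^K * k * ((k^K)⁻¹ * g⁻¹)
            = g * ((k^K * k) * ((k^K)⁻¹ * g⁻¹)) := by simp only [mul_assoc]
        _ = g * ((k * k^K) * ((k^K)⁻¹ * g⁻¹)) := by rw [hckK]
        _ = g * (k * ((k^K * (k^K)⁻¹) * g⁻¹)) := by simp only [mul_assoc]
        _ = g*k*g⁻¹ := by rw [mul_inv_cancel, one_mul, ← mul_assoc]
      have h2 : x*k*x⁻¹ = k := by rw [hcm]; group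
      have h3 : z * k = 1 * k := by rw [one_mul, ← hconj, ← h1, h2]
      exact mul_right_cancel h3
    have hInNx : InN x := hg.mul (hk.pow K)
    have hordxle : orderOf x ≤ n := Nat.le_of_dvd hnpos (orderOf_dvd_of_pow_eq_one hxn)
    have hmm := hmin x k hInNx hk hnc
    rw [hα] at hmm
    have hlt : n < p^α := by
      rw [hndef]
      exact Nat.pow_lt_pow_right hp.one_lt (by omega)
    omega

end Stmt13W


set_option linter.unusedSectionVars false
set_option maxHeartbeats 1000000

namespace Stmt13F
open Stmt13 Stmt13X Stmt13Z

variable {R : Type*} [Group R] [Finite R]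

lemma final_contradiction {p : ℕ} (hp : p.Prime) (hpR : IsPGroup p R)
    (H : Subgroup R)
    (hH : ∀ α : MulAut R, Subgroup.map α.toMonoidHom H = H →
      ∀ x : R, α x ∈ Subgroup.zpowers x)
    {u v z : R} (hu : InN u) (hv : InN v) (hu2 : u*u = z) (hv2 : v*v = z)
    (hz1 : z ≠ 1) (hz2 : z*z = 1) (hzc : ∀ w : R, Commute z w)
    (hvu : v*u*v⁻¹ = u⁻¹)
    (hHside : u ∈ H ∨ ∀ h ∈ H, h*u = u*h) : False := by
  classical
  have Du := dichotomy hp hpR hu hv hu2 hv2 hz1 hz2 hzc hvu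
  have hune : u⁻¹ ≠ u := by
    intro hc
    apply hz1
    rw [← hu2]
    calc u*u = u*u⁻¹ := by rw [hc]
    _ = 1 := by group
  have hIc : ∀ x : R, ¬ (x*u = u*x) → x*u*x⁻¹ = u⁻¹ := by
    intro x hx
    rcases Du x with h | h
    · exfalso
      apply hx
      calc x*u = (x*u*x⁻¹)*x := by group
      _ = u*x := by rw [h]
    · exact h
  set φfun : R → R := fun x => if x*u = u*x then x else x*u with hφdef
  have hval_c : ∀ x, x*u = u*x → φfun x = x := by
    intro x hx; rw [hφdef]; simp only [if_pos hx]
  have hval_n : ∀ x, ¬(x*u = u*x) → φfun x = x*u := by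
    intro x hx; rw [hφdef]; simp only [if_neg hx]
  have hmul_cc : ∀ x y : R, x*u = u*x → y*u = u*y → (x*y)*u = u*(x*y) := by
    intro x y hx hy
    calc x*y*u = x*(y*u) := by group
    _ = x*(u*y) := by rw [hy]
    _ = (x*u)*y := by group
    _ = (u*x)*y := by rw [hx]
    _ = u*(x*y) := by group
  have hmul_nn : ∀ x y : R, ¬(x*u = u*x) → ¬(y*u = u*y) → (x*y)*u = u*(x*y) := by
    intro x y hx hy
    have h1 := hIc x hx
    have h2 := hIc y hy
    have h3 : (x*y)*u*(x*y)⁻¹ = u := by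
      calc (x*y)*u*(x*y)⁻¹ = x*(y*u*y⁻¹)*x⁻¹ := by group
      _ = x*u⁻¹*x⁻¹ := by rw [h2]
      _ = (x*u*x⁻¹)⁻¹ := by group
      _ = u := by rw [h1, inv_inv]
    calc (x*y)*u = ((x*y)*u*(x*y)⁻¹)*(x*y) := by group
    _ = u*(x*y) := by rw [h3]
  have hmul_cn : ∀ x y : R, x*u = u*x → ¬(y*u = u*y) → ¬((x*y)*u = u*(x*y)) := by
    intro x y hx hy hc
    apply hy
    have h1 : x*(y*u) = x*(u*y) := by
      calc x*(y*u) = (x*y)*u := by group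
      _ = u*(x*y) := hc
      _ = (u*x)*y := by group
      _ = (x*u)*y := by rw [← hx]
      _ = x*(u*y) := by group
    exact mul_left_cancel h1
  have hmul_nc : ∀ x y : R, ¬(x*u = u*x) → (y*u = u*y) → ¬((x*y)*u = u*(x*y)) := by
    intro x y hx hy hc
    apply hx
    have h1 : (x*u)*y = (u*x)*y := by
      calc (x*u)*y = x*(u*y) := by group
      _ = x*(y*u) := by rw [← hy]
      _ = (x*y)*u := by group
      _ = u*(x*y) := hc
      _ = (u*x)*y := by group
    exact mul_right_cancel h1
  have hφmul : ∀ x y : R, φfun (x*y) = φfun x * φfun y := by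
    intro x y
    by_cases hx : x*u = u*x <;> by_cases hy : y*u = u*y
    · rw [hval_c x hx, hval_c y hy, hval_c _ (hmul_cc x y hx hy)]
    · rw [hval_c x hx, hval_n y hy, hval_n _ (hmul_cn x y hx hy), mul_assoc]
    · rw [hval_n x hx, hval_c y hy, hval_n _ (hmul_nc x y hx hy)]
      calc x*y*u = x*(y*u) := by group
      _ = x*(u*y) := by rw [hy]
      _ = (x*u)*y := by group
    · rw [hval_n x hx, hval_n y hy, hval_c _ (hmul_nn x y hx hy)]
      have h2 := hIc y hy
      have h5 : y*u⁻¹*y⁻¹ = u := by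
        calc y*u⁻¹*y⁻¹ = (y*u*y⁻¹)⁻¹ := by group
        _ = u := by rw [h2, inv_inv]
      have h3 : u*y = y*u⁻¹ := by
        calc u*y = (y*u⁻¹*y⁻¹)*y := by rw [h5]
        _ = y*u⁻¹ := by group
      calc x*y = x*(y*(u⁻¹*u)) := by group
      _ = x*((y*u⁻¹)*u) := by group
      _ = x*((u*y)*u) := by rw [← h3]
      _ = (x*u)*(y*u) := by group
  set φ : R →* R :=
    { toFun := φfun,
      map_one' := hval_c 1 (by rw [one_mul, mul_one]),
      map_mul' := hφmul } with hφmdef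
  have hinj : Function.Injective φ := by
    intro a b hab
    have hab' : φfun a = φfun b := hab
    by_cases ha : a*u = u*a <;> by_cases hb : b*u = u*b
    · rwa [hval_c a ha, hval_c b hb] at hab'
    · exfalso
      rw [hval_c a ha, hval_n b hb] at hab'
      apply hb
      have h1 : (b*u)*u = u*(b*u) := by rw [← hab']; exact ha
      have h2 : (b*u)*u = (u*b)*u := by rw [h1, ← mul_assoc]
      exact mul_right_cancel h2
    · exfalso
      rw [hval_n a ha, hval_c b hb] at hab'
      apply ha
      have h1 : (a*u)*u = u*(a*u) := by rw [hab']; exact hb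
      have h2 : (a*u)*u = (u*a)*u := by rw [h1, ← mul_assoc]
      exact mul_right_cancel h2
    · rw [hval_n a ha, hval_n b hb] at hab'
      exact mul_right_cancel hab'
  have hbij : Function.Bijective φ := (Finite.injective_iff_bijective).mp hinj
  set α : MulAut R := MulEquiv.ofBijective φ hbij with hαdef
  have hαval : ∀ x : R, α x = φfun x := fun x => rfl
  have hmap : Subgroup.map α.toMonoidHom H = H := by
    ext r
    simp only [Subgroup.mem_map]
    constructor
    · rintro ⟨w, hwH, hw⟩
      have hw' : φfun w = r := hw
      rw [← hw']
      by_cases hcomm : w*u = u*w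
      · rw [hval_c w hcomm]; exact hwH
      · rw [hval_n w hcomm]
        rcases hHside with hu_in | hall
        · exact H.mul_mem hwH hu_in
        · exact absurd (hall w hwH) hcomm
    · intro hr
      by_cases hcomm : r*u = u*r
      · exact ⟨r, hr, hval_c r hcomm⟩
      · rcases hHside with hu_in | hall
        · refine ⟨r * u⁻¹, H.mul_mem hr (H.inv_mem hu_in), ?_⟩
          have hnc2 : ¬ ((r*u⁻¹)*u = u*(r*u⁻¹)) := by
            intro hc
            apply hcomm
            have h1 : r = u*(r*u⁻¹) := by rw [← hc]; group
            calc r*u = (u*(r*u⁻¹))*u := by rw [← h1]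
            _ = u*r := by group
          have : φfun (r*u⁻¹) = (r*u⁻¹)*u := hval_n _ hnc2
          calc α.toMonoidHom (r*u⁻¹) = (r*u⁻¹)*u := this
          _ = r := by group
        · exact absurd (hall r hr) hcomm
  have hαv := hH α hmap v
  have hvnc : ¬ (v*u = u*v) := by
    intro hc
    apply hune
    rw [← hvu]
    calc v*u*v⁻¹ = (u*v)*v⁻¹ := by rw [hc]
    _ = u := by group
  rw [hαval v, hval_n v hvnc] at hαv
  have hu_in : u ∈ Subgroup.zpowers v := by
    have h1 : u = v⁻¹ * (v*u) := by group
    rw [h1]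
    exact Subgroup.mul_mem _ (Subgroup.inv_mem _ (Subgroup.mem_zpowers v)) hαv
  exact hvnc (commute_of_mem_zpowers hu_in).eq

end Stmt13F


set_option linter.unusedSectionVars false
set_option maxHeartbeats 1000000

section FinalAssembly

open Stmt13 Stmt13X Stmt13Z Stmt13W Stmt13F

/-- Let `p` be a prime and `R` a finite non-cyclic `p`-group admitting a subgroup `H`
such that every automorphism of `R` fixing `H` setwise is a power automorphism.  Then
the Baer norm `N(R) = ⋂_{K ≤ R} N_R(K)` is abelian. -/
theorem stmt13 (p : ℕ) (hp : p.Prime) (R : Type*) [Group R] [Finite R]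
    (hpR : IsPGroup p R) (hnc : ¬ IsCyclic R) (H : Subgroup R)
    (hH : ∀ α : MulAut R, Subgroup.map α.toMonoidHom H = H →
      ∀ x : R, α x ∈ Subgroup.zpowers x) :
    ∀ a ∈ (⨅ K : Subgroup R, Subgroup.normalizer (K : Set R)), ∀ b ∈ (⨅ K : Subgroup R, Subgroup.normalizer (K : Set R)),
      a * b = b * a := by
  classical
  intro a ha b hb
  by_contra hab
  have hInN : ∀ r : R, r ∈ (⨅ K : Subgroup R, Subgroup.normalizer (K : Set R)) → InN r := by
    intro r hr x
    have h1 : r ∈ Subgroup.normalizer (Subgroup.zpowers x : Set R) := Subgroup.mem_iInf.mp hr _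
    exact (Subgroup.mem_normalizer_iff.mp h1 x).mp (Subgroup.mem_zpowers x)
  have hA := hInN a ha
  have hB := hInN b hb
  set P : ℕ → Prop := fun nn => ∃ g k : R, InN g ∧ InN k ∧ g*k ≠ k*g ∧
    orderOf g + orderOf k = nn with hPdef
  have hPex : ∃ nn, P nn := ⟨_, a, b, hA, hB, hab, rfl⟩
  obtain ⟨g, k, hg, hk, hgk, hnn⟩ := Nat.find_spec hPex
  have hmin : ∀ g' k' : R, InN g' → InN k' → g'*k' ≠ k'*g' →
      orderOf g + orderOf k ≤ orderOf g' + orderOf k' := by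
    intro g' k' h1 h2 h3
    rw [hnn]
    exact Nat.find_min' hPex ⟨g', k', h1, h2, h3, rfl⟩
  have hq8 : ∃ u v z : R, InN u ∧ InN v ∧ u*u = z ∧ v*v = z ∧ z ≠ 1 ∧ z*z = 1 ∧
      (∀ w : R, Commute z w) ∧ v*u*v⁻¹ = u⁻¹ ∧ u*v ≠ v*u := by
    rcases le_total (orderOf g) (orderOf k) with h | h
    · exact q8_of_min hp hpR hg hk hgk h hmin
    · refine q8_of_min hp hpR hk hg (fun hc => hgk hc.symm) h ?_
      intro g' k' h1 h2 h3
      rw [Nat.add_comm (orderOf k)]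
      exact hmin g' k' h1 h2 h3
  obtain ⟨u, v, z, hu, hv, hu2, hv2, hz1, hz2, hzc, hvu, huv⟩ := hq8
  have hzinv : z⁻¹ = z := inv_eq_of_mul_eq_one_right hz2
  have hu4 : u^4 = 1 := by rw [pow_four_eq, hu2, hz2]
  have huinv : u⁻¹ = z*u := by
    have h5 : u * u ^ 3 = 1 := by rw [← pow_succ']; exact hu4
    have h6 : u⁻¹ = u ^ 3 := inv_eq_of_mul_eq_one_right h5
    rw [h6, pow_three_eq, hu2]
  by_cases hall : ∀ h ∈ H, h*u = u*h
  · exact (final_contradiction hp hpR H hH hu hv hu2 hv2 hz1 hz2 hzc hvu (Or.inr hall)).elim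
  push_neg at hall
  obtain ⟨h₀, hh₀H, hh₀u⟩ := hall
  have hh₀N : InN h₀ := by
    intro x
    have hconjH : Subgroup.map (MulAut.conj h₀).toMonoidHom H = H := by
      ext r
      simp only [Subgroup.mem_map]
      constructor
      · rintro ⟨w, hwH, hw⟩
        rw [← hw]
        have : (MulAut.conj h₀).toMonoidHom w = h₀ * w * h₀⁻¹ := rfl
        rw [this]
        exact H.mul_mem (H.mul_mem hh₀H hwH) (H.inv_mem hh₀H)
      · intro hr
        refine ⟨h₀⁻¹ * r * h₀, H.mul_mem (H.mul_mem (H.inv_mem hh₀H) hr) hh₀H, ?_⟩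
        have : (MulAut.conj h₀).toMonoidHom (h₀⁻¹ * r * h₀) = h₀ * (h₀⁻¹ * r * h₀) * h₀⁻¹ := rfl
        rw [this]
        group
    have h2 := hH (MulAut.conj h₀) hconjH x
    have h3 : (MulAut.conj h₀) x = h₀ * x * h₀⁻¹ := rfl
    rwa [h3] at h2
  set z' := h₀*u*h₀⁻¹*u⁻¹ with hz'def
  have hz'1 : z' ≠ 1 := by
    intro hc
    apply hh₀u
    calc h₀*u = (h₀*u*h₀⁻¹*u⁻¹)*(u*h₀) := by group
    _ = u*h₀ := by rw [← hz'def, hc, one_mul]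
  have hz'u : z' ∈ Subgroup.zpowers u := Stmt13Y.comm_mem_right hh₀N hu
  have hz'h : z' ∈ Subgroup.zpowers h₀ := Stmt13Y.comm_mem_left hh₀N hu
  have hz'c : ∀ x : R, Commute z' x := fun x => Stmt13Y.comm_central hh₀N hu x
  have hz'z : z' = z := by
    rcases zpowers_fourth hu4 hz'u with h|h|h|h
    · exact absurd h hz'1
    · exfalso
      apply huv
      exact ((h ▸ hz'c v) : Commute u v).eq
    · rw [h, pow_two, hu2]
    · exfalso
      apply huv
      have h3 : u^3 = z*u := by rw [pow_three_eq, hu2]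
      have hc1 : Commute (z*u) v := by rw [← h3, ← h]; exact hz'c v
      have hc2 : Commute (z⁻¹ * (z*u)) v := ((hzc v).inv_left).mul_left hc1
      have h4 : z⁻¹ * (z*u) = u := by group
      rw [h4] at hc2
      exact hc2.eq
  have hinvert : h₀*u*h₀⁻¹ = u⁻¹ := by
    calc h₀*u*h₀⁻¹ = z' * u := by rw [hz'def]; group
    _ = z*u := by rw [hz'z]
    _ = u⁻¹ := huinv.symm
  have hzh₀ : z ∈ Subgroup.zpowers h₀ := hz'z ▸ hz'h
  obtain ⟨r, hr⟩ := (haveI : Fact p.Prime := ⟨hp⟩; IsPGroup.iff_orderOf).mp hpR h₀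
  have hp2 : p = 2 := by
    obtain ⟨kk, hkk⟩ := (haveI : Fact p.Prime := ⟨hp⟩; IsPGroup.iff_orderOf).mp hpR z
    rw [orderOf_eq_two hz2 hz1] at hkk
    rcases Nat.eq_zero_or_pos kk with rfl | hkpos
    · simp at hkk
    · have hdvd : p ∣ 2 := by rw [hkk]; exact dvd_pow_self p (by omega)
      exact (Nat.prime_dvd_prime_iff_eq hp Nat.prime_two).mp hdvd
  rw [hp2] at hr
  have hrcase : r = 0 ∨ r = 1 ∨ r = 2 ∨ 3 ≤ r := by omega
  rcases hrcase with h0 | h1 | h2 | h3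
  · -- r = 0 : h₀ = 1
    rw [h0, pow_zero] at hr
    exact hh₀u (by rw [orderOf_eq_one_iff.mp hr, one_mul, mul_one])
  · -- r = 1 : h₀² = 1, z = h₀, contradiction since z is central
    rw [h1, pow_one] at hr
    have hsq : h₀ * h₀ = 1 := by
      have := pow_orderOf_eq_one h₀
      rwa [hr, pow_two] at this
    rcases zpowers_sq hsq hzh₀ with h | h
    · exact hz1 h
    · exact hh₀u (h ▸ hzc u).eq
  · -- r = 2 : (h₀, u) is a Q8 pair with h₀ ∈ H
    rw [h2] at hr
    have hh₀2 : h₀*h₀ = z := by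
      obtain ⟨_, hzval⟩ := invol_unique hr hzh₀ hz2 hz1
      rw [hzval]
      norm_num
      rw [pow_two]
    have hh₀4 : h₀^4 = 1 := by rw [pow_four_eq, hh₀2, hz2]
    have hh₀inv : h₀⁻¹ = z*h₀ := by
      have h5 : h₀ * h₀ ^ 3 = 1 := by rw [← pow_succ']; exact hh₀4
      have h6 : h₀⁻¹ = h₀ ^ 3 := inv_eq_of_mul_eq_one_right h5
      rw [h6, pow_three_eq, hh₀2]
    have huh₀ : u*h₀*u⁻¹ = h₀⁻¹ := by
      have ha1 : u*h₀*u⁻¹*h₀⁻¹ = z'⁻¹ := by rw [hz'def]; group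
      calc u*h₀*u⁻¹ = (u*h₀*u⁻¹*h₀⁻¹)*h₀ := by group
      _ = z'⁻¹ * h₀ := by rw [ha1]
      _ = z*h₀ := by rw [hz'z, hzinv]
      _ = h₀⁻¹ := hh₀inv.symm
    exact (final_contradiction hp hpR H hH hh₀N hu hh₀2 hu2 hz1 hz2 hzc huh₀
      (Or.inl hh₀H)).elim
  · -- r ≥ 3 : impossible
    obtain ⟨_, hzval⟩ := invol_unique hr hzh₀ hz2 hz1
    set f := h₀^(2^(r-2)) with hfdef
    have hff : f*f = z := by
      rw [hfdef, ← pow_add, hzval]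
      congr 1
      have : 2^(r-1) = 2^(r-2) + 2^(r-2) := by
        rw [show r-1 = (r-2)+1 by omega, pow_succ]
        ring
      omega
    have hsq : h₀^2*u*(h₀^2)⁻¹ = u := by
      calc h₀^2*u*(h₀^2)⁻¹ = h₀*(h₀*u*h₀⁻¹)*h₀⁻¹ := by rw [pow_two]; group
      _ = h₀*u⁻¹*h₀⁻¹ := by rw [hinvert]
      _ = (h₀*u*h₀⁻¹)⁻¹ := by group
      _ = u := by rw [hinvert, inv_inv]
    have hc2u : Commute (h₀^2) u := by
      have h4 : h₀^2*u = u*h₀^2 := by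
        calc h₀^2*u = (h₀^2*u*(h₀^2)⁻¹)*h₀^2 := by group
        _ = u*h₀^2 := by rw [hsq]
      exact h4
    have hcfu : Commute f u := by
      have h5 : f = (h₀^2)^(2^(r-3)) := by
        rw [hfdef, ← pow_mul]
        congr 1
        rw [show r-2 = 1+(r-3) by omega, pow_add, pow_one]
      rw [h5]
      exact hc2u.pow_left _
    set x₀ := u*f with hx₀def
    have hx₀2 : x₀*x₀ = 1 := by
      calc x₀*x₀ = u*(f*u)*f := by rw [hx₀def]; group
      _ = u*(u*f)*f := by rw [← hcfu.symm.eq]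
      _ = (u*u)*(f*f) := by group
      _ = 1 := by rw [hu2, hff, hz2]
    have hcfh : Commute h₀ f := by
      rw [hfdef]
      exact (Commute.refl h₀).pow_right _
    have hconjx₀ : h₀*x₀*h₀⁻¹ = z*x₀ := by
      calc h₀*x₀*h₀⁻¹ = (h₀*u*h₀⁻¹)*(h₀*f*h₀⁻¹) := by rw [hx₀def]; group
      _ = u⁻¹*(h₀*f*h₀⁻¹) := by rw [hinvert]
      _ = u⁻¹*(f*h₀*h₀⁻¹) := by rw [← hcfh.eq]
      _ = u⁻¹*f := by group
      _ = (z*u)*f := by rw [← huinv]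
      _ = z*x₀ := by rw [hx₀def]; group
    have hmem := hh₀N x₀
    rw [hconjx₀] at hmem
    rcases zpowers_sq hx₀2 hmem with h | h
    · -- z*x₀ = 1 : x₀ = z, so u = z*f⁻¹ commutes with h₀
      apply hh₀u
      have hx₀z : x₀ = z := by
        have h4 : x₀ = z⁻¹ := by
          rw [eq_inv_iff_mul_eq_one]
          calc x₀ * z = z * x₀ := (hzc x₀).symm.eq
          _ = 1 := h
        rw [h4, hzinv]
      have huval : u = z*f⁻¹ := by
        have h5 : u*f = z := by rw [← hx₀def, hx₀z]
        calc u = (u*f)*f⁻¹ := by group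
        _ = z*f⁻¹ := by rw [h5]
      have hcu : Commute h₀ u := by
        rw [huval]
        exact ((hzc h₀).symm).mul_right (hcfh.inv_right)
      exact hcu.eq
    · -- z*x₀ = x₀ : z = 1
      apply hz1
      have h4 : z * x₀ = 1 * x₀ := by rw [one_mul]; exact h
      exact mul_right_cancel h4

end FinalAssembly
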